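/- Let 0 < α ≤ 1, 0 < ρ < 1, β > 0, γ ≥ 0, and let f : [0,∞) → ℝ be continuously differentiable with f and f' of at most exponential growth. Define the regularized Hilfer–Prabhakar derivative of f by (D f)(t) = ∫_0^t (t-s)^{-ρ} E_{α,1-ρ}^{-γ}(-β (t-s)^α) f'(s) ds. Then for every w > 0 with β < w^α and with w large enough that the Laplace transforms of f and f' converge absolutely, ∫_0^∞ e^{-wt} (D f)(t) dt = w^{ρ}(1 + β w^{-α})^{γ} ∫_0^∞ e^{-wt} f(t) dt − w^{ρ-1}(1 + β w^{-α})^{γ} f(0). -/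

import Mathlib

open MeasureTheory Real

/-- Pochhammer symbol `(g)_k = g (g+1) ⋯ (g+k-1)`. -/
noncomputable def poch (g : ℝ) (k : ℕ) : ℝ := ∏ i ∈ Finset.range k, (g + i)

/-- Three-parameter (Prabhakar) Mittag-Leffler function. -/
noncomputable def ml3 (a b g x : ℝ) : ℝ :=
  ∑' k : ℕ, poch g k * x ^ k / (Real.Gamma ((k : ℝ) * a + b) * (Nat.factorial k : ℝ))

/-- Regularized Hilfer–Prabhakar derivative of `f`. -/
noncomputable def hpDeriv (α ρ β γ : ℝ) (f : ℝ → ℝ) (t : ℝ) : ℝ :=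
  ∫ s in (0 : ℝ)..t, (t - s) ^ (-ρ) * ml3 α (1 - ρ) (-γ) (-β * (t - s) ^ α) * deriv f s

open Convolution

lemma poch_zero (g : ℝ) : poch g 0 = 1 := by simp [poch]

lemma poch_succ (g : ℝ) (k : ℕ) : poch g (k+1) = poch g k * (g + k) := by
  simp [poch, Finset.prod_range_succ]

lemma poch_nonneg {g : ℝ} (hg : 0 ≤ g) (k : ℕ) : 0 ≤ poch g k :=
  Finset.prod_nonneg fun i _ => by positivity

lemma summable_poch_geom {c x : ℝ} (hc : 0 ≤ c) (hx : 0 ≤ x) (hx1 : x < 1) :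
    Summable (fun k : ℕ => poch c k * x ^ k / (Nat.factorial k : ℝ)) := by
  set r : ℝ := (1 + x) / 2 with hr
  have hxr : x < r := by rw [hr]; linarith
  have hr1 : r < 1 := by rw [hr]; linarith
  refine summable_of_ratio_norm_eventually_le hr1 ?_
  have hlim : Filter.Tendsto (fun k : ℕ => (c + k) * x / (k + 1)) Filter.atTop (nhds x) := by
    have h1 : Filter.Tendsto (fun k : ℕ => (1:ℝ) / (k + 1)) Filter.atTop (nhds 0) :=
      tendsto_one_div_add_atTop_nhds_zero_nat
    have : (fun k : ℕ => (c + k) * x / (k + 1)) =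
        fun k : ℕ => ((c - 1) * x) * ((1:ℝ) / (k + 1)) + x := by
      funext k
      have hk : ((k:ℝ) + 1) ≠ 0 := by positivity
      field_simp
      ring
    rw [this]
    have := (h1.const_mul ((c - 1) * x)).add_const x
    simpa using this
  filter_upwards [hlim.eventually_le_const hxr] with k hk
  have hk1 : (0:ℝ) < (k:ℝ) + 1 := by positivity
  have hterm : poch c (k+1) * x ^ (k+1) / (Nat.factorial (k+1) : ℝ)
      = (poch c k * x ^ k / (Nat.factorial k : ℝ)) * ((c + k) * x / (k + 1)) := by
    rw [poch_succ, pow_succ, Nat.factorial_succ]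
    push_cast
    field_simp
  have h0 : 0 ≤ poch c k * x ^ k / (Nat.factorial k : ℝ) := by
    have := poch_nonneg hc k; positivity
  have h0' : 0 ≤ poch c (k+1) * x ^ (k+1) / (Nat.factorial (k+1) : ℝ) := by
    have := poch_nonneg hc (k+1); positivity
  rw [Real.norm_of_nonneg h0', Real.norm_of_nonneg h0, hterm]
  calc poch c k * x ^ k / (Nat.factorial k : ℝ) * ((c + k) * x / (k + 1))
      ≤ poch c k * x ^ k / (Nat.factorial k : ℝ) * r := mul_le_mul_of_nonneg_left hk h0
    _ = r * (poch c k * x ^ k / (Nat.factorial k : ℝ)) := mul_comm _ _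

noncomputable def dfac (g : ℝ) (k : ℕ) : ℝ := ∏ i ∈ Finset.range k, (g - i)

lemma dfac_zero (g : ℝ) : dfac g 0 = 1 := by simp [dfac]

lemma dfac_succ (g : ℝ) (k : ℕ) : dfac g (k+1) = dfac g k * (g - k) := by
  simp [dfac, Finset.prod_range_succ]

lemma poch_neg_eq (g : ℝ) (k : ℕ) : poch (-g) k = (-1)^k * dfac g k := by
  induction k with
  | zero => simp [poch, dfac]
  | succ k IH =>
    rw [poch, dfac, Finset.prod_range_succ, Finset.prod_range_succ, ← poch, ← dfac, IH, pow_succ]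
    ring

lemma abs_dfac_le {g : ℝ} (hg : 0 ≤ g) (k : ℕ) : |dfac g k| ≤ poch g k := by
  rw [poch, dfac, Finset.abs_prod]
  refine Finset.prod_le_prod (fun i _ => abs_nonneg _) (fun i _ => ?_)
  rw [abs_le]
  constructor <;>
    · have : (0:ℝ) ≤ (i:ℝ) := Nat.cast_nonneg i
      linarith

-- derivative helper
lemma hasDerivAt_one_add_rpow {e u : ℝ} (hu : 0 ≤ u) :
    HasDerivAt (fun v : ℝ => (1 + v) ^ e) (e * (1 + u) ^ (e - 1)) u := by
  have h0 : (1:ℝ) + u ≠ 0 := by positivity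
  have h1 := Real.hasDerivAt_rpow_const (x := 1 + u) (p := e) (Or.inl h0)
  have h2 : HasDerivAt (fun v : ℝ => 1 + v) 1 u := (hasDerivAt_id u).const_add 1
  have := HasDerivAt.comp u h1 h2
  rw [mul_one] at this
  exact this

lemma iter_deriv_one_add_rpow {g y : ℝ} (hy0 : 0 < y) (k : ℕ) :
    Set.EqOn (iteratedDerivWithin k (fun u : ℝ => (1 + u) ^ g) (Set.Icc 0 y))
      (fun u : ℝ => dfac g k * (1 + u) ^ (g - k)) (Set.Icc 0 y) := by
  have hs : UniqueDiffOn ℝ (Set.Icc (0:ℝ) y) := uniqueDiffOn_Icc hy0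
  induction k with
  | zero =>
    intro u hu
    simp [iteratedDerivWithin_zero, dfac_zero]
  | succ k IH =>
    intro u hu
    rw [iteratedDerivWithin_succ, derivWithin_congr IH (IH hu)]
    have hd : HasDerivAt (fun v : ℝ => dfac g k * (1 + v) ^ (g - k))
        (dfac g (k+1) * (1 + u) ^ (g - (k+1:ℕ))) u := by
      have := (hasDerivAt_one_add_rpow (e := g - k) hu.1).const_mul (dfac g k)
      refine this.congr_deriv ?_
      rw [dfac_succ]
      push_cast
      ring_nf
    rw [hd.differentiableAt.derivWithin (hs.uniqueDiffWithinAt hu)]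
    exact hd.deriv

lemma hasSum_binomial {g y : ℝ} (hg : 0 ≤ g) (hy0 : 0 < y) (hy1 : y < 1) :
    HasSum (fun k : ℕ => poch (-g) k * (-y) ^ k / (Nat.factorial k : ℝ)) ((1 + y) ^ g) := by
  set s : Set ℝ := Set.Icc 0 y with hsdef
  set f : ℝ → ℝ := fun u => (1 + u) ^ g with hfdef
  set M : ℝ := max 1 ((1 + y) ^ g) with hMdef
  set b : ℕ → ℝ := fun k => poch g k * y ^ k / (Nat.factorial k : ℝ) with hbdef
  set T : ℕ → ℝ := fun n => ∑ k ∈ Finset.range (n+1), dfac g k * y ^ k / (Nat.factorial k : ℝ)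
    with hTdef
  have hfc : ∀ n : ℕ, ContDiffOn ℝ n f s := by
    intro n u hu
    have h0 : (1:ℝ) + u ≠ 0 := by have := hu.1; positivity
    have h1 : ContDiffAt ℝ n (fun x : ℝ => x ^ g) (1 + u) :=
      Real.contDiffAt_rpow_const_of_ne h0
    have h2 : ContDiffAt ℝ n (fun v : ℝ => 1 + v) u :=
      (contDiff_const.add contDiff_id).contDiffAt
    exact ((h1.comp u h2).congr_of_eventuallyEq (by filter_upwards with v; rfl)).contDiffWithinAt
  have key : ∀ n : ℕ, |(1 + y) ^ g - T n| ≤ M * (poch g (n+1) * y ^ (n+1) / (Nat.factorial (n+1) : ℝ)) := by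
    intro n
    have hdiff : DifferentiableOn ℝ (iteratedDerivWithin n f s) (Set.Ioo 0 y) := by
      have hg' : DifferentiableOn ℝ (fun u : ℝ => dfac g n * (1 + u) ^ (g - (n:ℝ)))
          (Set.Ioo 0 y) := fun u hu => ((hasDerivAt_one_add_rpow (e := g - n)
            hu.1.le).const_mul (dfac g n)).differentiableAt.differentiableWithinAt
      exact hg'.congr fun u hu => iter_deriv_one_add_rpow hy0 n (Set.Ioo_subset_Icc_self hu)
    obtain ⟨ξ, hξ, hrem⟩ := taylor_mean_remainder_lagrange (n := n) hy0.ne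
      (by rw [Set.uIcc_of_le hy0.le]; exact hfc n)
      (by rw [Set.uIcc_of_le hy0.le, Set.uIoo_of_le hy0.le]; exact hdiff)
    rw [Set.uIoo_of_le hy0.le] at hξ
    rw [Set.uIcc_of_le hy0.le] at hrem
    have hT : taylorWithinEval f n s 0 y = T n := by
      rw [taylor_within_apply, hTdef]
      refine Finset.sum_congr rfl fun k hk => ?_
      rw [iter_deriv_one_add_rpow hy0 k (Set.left_mem_Icc.2 hy0.le)]
      simp only [smul_eq_mul]
      rw [add_zero, Real.one_rpow, sub_zero]
      ring
    have hiter := iter_deriv_one_add_rpow (g := g) hy0 (n+1) (Set.Ioo_subset_Icc_self hξ)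
    rw [hT] at hrem
    rw [hrem, hiter]
    have h1ξ : (1:ℝ) ≤ 1 + ξ := by have := hξ.1; linarith
    have hbound : (1 + ξ) ^ (g - (n+1:ℕ)) ≤ M := by
      rcases le_or_gt (g - (n+1:ℕ)) 0 with he | he
      · exact le_trans (Real.rpow_le_one_of_one_le_of_nonpos h1ξ he) (le_max_left _ _)
      · refine le_trans (le_trans (Real.rpow_le_rpow (by linarith) (by have := hξ.2; linarith) he.le)
          (Real.rpow_le_rpow_of_exponent_le (by linarith) (by push_cast at he ⊢; linarith))) (le_max_right _ _)
    have hb0 : (0:ℝ) ≤ (1 + ξ) ^ (g - (n+1:ℕ)) := Real.rpow_nonneg (by linarith) _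
    beta_reduce
    rw [abs_div, abs_mul, abs_mul, sub_zero]
    rw [abs_of_nonneg hb0, abs_of_nonneg (pow_nonneg hy0.le _),
      abs_of_nonneg (by positivity : (0:ℝ) ≤ ((n+1).factorial : ℝ))]
    rw [div_le_iff₀ (by positivity), mul_comm M]
    have h1 : |dfac g (n+1)| * (1 + ξ) ^ (g - (n+1:ℕ)) ≤ poch g (n+1) * M :=
      mul_le_mul (abs_dfac_le hg (n+1)) hbound hb0 (poch_nonneg hg (n+1))
    calc |dfac g (n+1)| * (1 + ξ) ^ (g - (n+1:ℕ)) * y ^ (n+1)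
        ≤ poch g (n+1) * M * y ^ (n+1) :=
          mul_le_mul_of_nonneg_right h1 (pow_nonneg hy0.le _)
      _ = poch g (n+1) * y ^ (n+1) / (Nat.factorial (n+1) : ℝ) * M * ((n+1).factorial : ℝ) := by
          field_simp
  have hbsum : Summable b := summable_poch_geom hg hy0.le hy1
  have hb0 : Filter.Tendsto (fun n : ℕ => M * b (n+1)) Filter.atTop (nhds 0) := by
    have := (hbsum.tendsto_atTop_zero.comp (Filter.tendsto_add_atTop_nat 1)).const_mul M
    simpa using this
  have hTlim : Filter.Tendsto T Filter.atTop (nhds ((1 + y) ^ g)) := by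
    have hz : Filter.Tendsto (fun n => T n - (1 + y) ^ g) Filter.atTop (nhds 0) := by
      refine squeeze_zero_norm (fun n => ?_) hb0
      rw [Real.norm_eq_abs, abs_sub_comm]
      exact key n
    have := hz.add_const ((1 + y) ^ g)
    simpa using this
  have hssum : Summable (fun k : ℕ => dfac g k * y ^ k / (Nat.factorial k : ℝ)) := by
    refine Summable.of_norm_bounded hbsum fun k => ?_
    rw [Real.norm_eq_abs, abs_div, abs_mul, abs_of_nonneg (pow_nonneg hy0.le _),
      abs_of_nonneg (by positivity : (0:ℝ) ≤ (k.factorial : ℝ))]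
    exact div_le_div_of_nonneg_right (mul_le_mul_of_nonneg_right (abs_dfac_le hg k)
      (pow_nonneg hy0.le _)) (by positivity) |>.trans_eq rfl
  have hTlim2 : Filter.Tendsto T Filter.atTop
      (nhds (∑' k, dfac g k * y ^ k / (Nat.factorial k : ℝ))) :=
    hssum.hasSum.tendsto_sum_nat.comp (Filter.tendsto_add_atTop_nat 1)
  have htsum : (∑' k, dfac g k * y ^ k / (Nat.factorial k : ℝ)) = (1 + y) ^ g :=
    tendsto_nhds_unique hTlim2 hTlim
  have heq : (fun k : ℕ => poch (-g) k * (-y) ^ k / (Nat.factorial k : ℝ))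
      = fun k : ℕ => dfac g k * y ^ k / (Nat.factorial k : ℝ) := by
    funext k
    rw [poch_neg_eq, neg_pow y k]
    ring_nf
    rw [mul_comm k 2, pow_mul]
    norm_num
  rw [heq]
  exact htsum ▸ hssum.hasSum

lemma abs_poch_neg_le {g : ℝ} (hg : 0 ≤ g) (k : ℕ) : |poch (-g) k| ≤ poch g k := by
  rw [poch_neg_eq, abs_mul, abs_pow, abs_neg, abs_one, one_pow, one_mul]
  exact abs_dfac_le hg k

lemma limit_zero_of_integrable {h : ℝ → ℝ} {l : ℝ} (hint : IntegrableOn h (Set.Ioi 0))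
    (hl : Filter.Tendsto h Filter.atTop (nhds l)) : l = 0 := by
  by_contra hne
  have hpos : 0 < |l| / 2 := by positivity
  have hev : ∀ᶠ t in Filter.atTop, |l| / 2 ≤ |h t| :=
    (hl.abs).eventually_const_le (by linarith [abs_nonneg l])
  obtain ⟨T, hT⟩ := Filter.eventually_atTop.1 hev
  set T' : ℝ := max T 1 with hT'def
  have hsub : Set.Ioi T' ⊆ Set.Ioi (0:ℝ) := Set.Ioi_subset_Ioi (by positivity)
  have hint' : IntegrableOn h (Set.Ioi T') := hint.mono_set hsub
  have hconst : IntegrableOn (fun _ : ℝ => |l| / 2) (Set.Ioi T') := by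
    refine MeasureTheory.Integrable.mono hint' aestronglyMeasurable_const ?_
    refine (ae_restrict_iff' measurableSet_Ioi).2 (Filter.Eventually.of_forall fun t ht => ?_)
    rw [Real.norm_eq_abs, Real.norm_eq_abs, abs_of_nonneg hpos.le]
    exact hT t (le_trans (le_max_left T 1) ht.le)
  rw [integrableOn_const_iff] at hconst
  rcases hconst with h1 | h2
  · exact hne (by simpa [abs_eq_zero] using h1)
  · rw [Real.volume_Ioi] at h2
    exact (lt_irrefl _ h2).elim

lemma laplace_deriv {f : ℝ → ℝ} (hf : ContDiff ℝ 1 f) {w : ℝ} (hw : 0 < w)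
    (hLf : IntegrableOn (fun t => Real.exp (-w * t) * f t) (Set.Ioi 0))
    (hLf' : IntegrableOn (fun t => Real.exp (-w * t) * deriv f t) (Set.Ioi 0)) :
    ∫ t in Set.Ioi (0:ℝ), Real.exp (-w * t) * deriv f t
      = w * (∫ t in Set.Ioi (0:ℝ), Real.exp (-w * t) * f t) - f 0 := by
  set g : ℝ → ℝ := fun t => Real.exp (-w * t) * f t with hgdef
  set g' : ℝ → ℝ := fun t => Real.exp (-w * t) * deriv f t - w * (Real.exp (-w * t) * f t)
    with hg'def
  have hfd : ∀ t : ℝ, HasDerivAt f (deriv f t) t := fun t =>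
    ((hf.differentiable one_ne_zero) t).hasDerivAt
  have hder : ∀ t : ℝ, HasDerivAt g (g' t) t := by
    intro t
    have he : HasDerivAt (fun t : ℝ => Real.exp (-w * t)) (Real.exp (-w * t) * (-w)) t := by
      have h1 : HasDerivAt (fun t : ℝ => -w * t) (-w) t := by
        simpa using (hasDerivAt_id t).const_mul (-w)
      exact (Real.hasDerivAt_exp (-w * t)).comp t h1
    have := he.mul (hfd t)
    refine this.congr_deriv ?_
    rw [hg'def]
    ring
  have hg'int : IntegrableOn g' (Set.Ioi 0) := hLf'.sub (hLf.const_mul w)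
  have hIlim : Filter.Tendsto (fun T => ∫ t in (0:ℝ)..T, g' t) Filter.atTop
      (nhds (∫ t in Set.Ioi (0:ℝ), g' t)) :=
    intervalIntegral_tendsto_integral_Ioi 0 hg'int Filter.tendsto_id
  have heq : ∀ T : ℝ, 0 ≤ T → g T = g 0 + ∫ t in (0:ℝ)..T, g' t := by
    intro T hT
    have hii : IntervalIntegrable g' volume 0 T := by
      rw [intervalIntegrable_iff_integrableOn_Ioc_of_le hT]
      exact hg'int.mono_set Set.Ioc_subset_Ioi_self
    rw [intervalIntegral.integral_eq_sub_of_hasDerivAt (fun t _ => hder t) hii]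
    ring
  have hglim : Filter.Tendsto g Filter.atTop (nhds (g 0 + ∫ t in Set.Ioi (0:ℝ), g' t)) := by
    refine Filter.Tendsto.congr' ?_ ((hIlim.const_add (g 0)))
    filter_upwards [Filter.eventually_ge_atTop (0:ℝ)] with T hT
    exact (heq T hT).symm
  have hl0 : g 0 + ∫ t in Set.Ioi (0:ℝ), g' t = 0 := limit_zero_of_integrable hLf hglim
  have hint_eq : ∫ t in Set.Ioi (0:ℝ), g' t
      = (∫ t in Set.Ioi (0:ℝ), Real.exp (-w * t) * deriv f t)
        - w * ∫ t in Set.Ioi (0:ℝ), Real.exp (-w * t) * f t := by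
    rw [hg'def]
    rw [integral_sub hLf' (hLf.const_mul w), integral_const_mul]
  have hg0 : g 0 = f 0 := by simp [hgdef]
  rw [hint_eq, hg0] at hl0
  linarith

lemma laplace_kernel {α ρ β γ w : ℝ} (hα : 0 < α) (hρ : 0 < ρ) (hρ1 : ρ < 1)
    (hβ : 0 < β) (hγ : 0 ≤ γ) (hw : 0 < w) (hβw : β < w ^ α) :
    IntegrableOn (fun u : ℝ => Real.exp (-w * u) * (u ^ (-ρ) * ml3 α (1 - ρ) (-γ) (-β * u ^ α)))
      (Set.Ioi 0)
    ∧ ∫ u in Set.Ioi (0:ℝ), Real.exp (-w * u) * (u ^ (-ρ) * ml3 α (1 - ρ) (-γ) (-β * u ^ α))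
      = w ^ (ρ - 1) * (1 + β * w ^ (-α)) ^ γ := by
  have hwα : 0 < w ^ α := Real.rpow_pos_of_pos hw α
  set x : ℝ := β * w ^ (-α) with hxdef
  have hx : 0 < x := by
    have := Real.rpow_pos_of_pos hw (-α)
    positivity
  have hx1 : x < 1 := by
    rw [hxdef, Real.rpow_neg hw.le]
    rw [mul_comm, inv_mul_lt_iff₀ hwα, mul_one]
    exact hβw
  set c : ℕ → ℝ := fun k =>
    poch (-γ) k * (-β)^k / (Real.Gamma ((k:ℝ)*α + (1-ρ)) * (Nat.factorial k : ℝ)) with hcdef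
  set term : ℕ → ℝ → ℝ := fun k u => Real.exp (-w*u) * (c k * u ^ ((k:ℝ)*α - ρ)) with htermdef
  have hak : ∀ k : ℕ, 0 < (k:ℝ)*α + (1-ρ) := by
    intro k
    have : 0 ≤ (k:ℝ)*α := by positivity
    linarith
  have hΓpos : ∀ k : ℕ, 0 < Real.Gamma ((k:ℝ)*α + (1-ρ)) := fun k =>
    Real.Gamma_pos_of_pos (hak k)
  -- integrability of each term
  have hint : ∀ k : ℕ, IntegrableOn (term k) (Set.Ioi 0) := by
    intro k
    have hs : (-1:ℝ) < (k:ℝ)*α - ρ := by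
      have : 0 ≤ (k:ℝ)*α := by positivity
      linarith
    have h0 := (integrableOn_rpow_mul_exp_neg_mul_rpow hs zero_lt_one hw).const_mul (c k)
    refine h0.congr ?_
    filter_upwards [ae_restrict_mem measurableSet_Ioi] with u hu
    rw [Real.rpow_one]
    ring
  -- value of each term integral
  have hGa := fun k : ℕ => integral_rpow_mul_exp_neg_mul_Ioi (hak k) hw
  have hpow : ∀ k : ℕ, (1/w) ^ ((k:ℝ)*α + (1-ρ)) = w ^ (ρ-1) * (w ^ (-α))^k := by
    intro k
    rw [one_div, ← Real.rpow_neg_one w, ← Real.rpow_natCast (w ^ (-α)) k,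
      ← Real.rpow_mul hw.le, ← Real.rpow_mul hw.le, ← Real.rpow_add hw]
    congr 1
    ring
  have hval : ∀ k : ℕ, ∫ u in Set.Ioi (0:ℝ), term k u
      = w ^ (ρ-1) * (poch (-γ) k * (-x)^k / (Nat.factorial k : ℝ)) := by
    intro k
    have heq : ∀ u : ℝ, term k u
        = c k * (u ^ (((k:ℝ)*α + (1-ρ)) - 1) * Real.exp (-(w*u))) := by
      intro u
      rw [htermdef]
      simp only []
      rw [show ((k:ℝ)*α + (1-ρ)) - 1 = (k:ℝ)*α - ρ by ring, neg_mul]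
      ring
    simp_rw [heq]
    rw [integral_const_mul, hGa k, hpow k, hcdef]
    simp only []
    have hΓ := (hΓpos k).ne'
    have hfa : (Nat.factorial k : ℝ) ≠ 0 := by positivity
    have hxpow : (-β)^k * (w ^ (-α))^k = (-x)^k := by
      rw [← mul_pow, hxdef]
      ring_nf
    field_simp
    rw [← hxpow]
    ring
  -- norm integrals
  have hnormval : ∀ k : ℕ, ∫ u in Set.Ioi (0:ℝ), ‖term k u‖
      = w ^ (ρ-1) * (|poch (-γ) k| * x^k / (Nat.factorial k : ℝ)) := by
    intro k
    have heq : ∀ u ∈ Set.Ioi (0:ℝ), ‖term k u‖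
        = |c k| * (u ^ (((k:ℝ)*α + (1-ρ)) - 1) * Real.exp (-(w*u))) := by
      intro u hu
      have hu0 : (0:ℝ) < u := hu
      rw [htermdef]
      simp only []
      rw [Real.norm_eq_abs, abs_mul, abs_mul, abs_of_nonneg (Real.exp_nonneg _),
        abs_of_nonneg (Real.rpow_nonneg hu0.le _),
        show ((k:ℝ)*α + (1-ρ)) - 1 = (k:ℝ)*α - ρ by ring, neg_mul]
      ring
    rw [setIntegral_congr_fun measurableSet_Ioi heq]
    rw [integral_const_mul, hGa k, hpow k, hcdef]
    simp only []
    have hΓ := (hΓpos k).ne'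
    have hfa : (Nat.factorial k : ℝ) ≠ 0 := by positivity
    rw [abs_div, abs_mul, abs_of_nonneg (mul_pos (hΓpos k) (by positivity : (0:ℝ) < (Nat.factorial k : ℝ))).le, abs_pow, abs_neg, abs_of_nonneg hβ.le]
    have hxpow : β^k * (w ^ (-α))^k = x^k := by
      rw [← mul_pow, hxdef]
    field_simp
    rw [← hxpow]
    ring
  have hsumnorm : Summable (fun k : ℕ => ∫ u in Set.Ioi (0:ℝ), ‖term k u‖) := by
    refine Summable.of_nonneg_of_le
      (fun k => integral_nonneg fun u => norm_nonneg _) (fun k => ?_)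
      (((summable_poch_geom hγ hx.le hx1).mul_left (w ^ (ρ-1))))
    rw [hnormval k]
    have h1 : |poch (-γ) k| * x^k / (Nat.factorial k : ℝ)
        ≤ poch γ k * x^k / (Nat.factorial k : ℝ) := by
      apply div_le_div_of_nonneg_right _ (by positivity)
      exact mul_le_mul_of_nonneg_right (abs_poch_neg_le hγ k) (by positivity)
    exact mul_le_mul_of_nonneg_left h1 (Real.rpow_nonneg hw.le _)
  -- pointwise identity
  have hpt : ∀ u ∈ Set.Ioi (0:ℝ),
      Real.exp (-w * u) * (u ^ (-ρ) * ml3 α (1 - ρ) (-γ) (-β * u ^ α))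
        = ∑' k, term k u := by
    intro u hu
    have hu0 : (0:ℝ) < u := hu
    rw [ml3, ← tsum_mul_left, ← tsum_mul_left]
    refine tsum_congr fun k => ?_
    have h1 : (-β * u ^ α)^k = (-β)^k * u ^ (α * (k:ℝ)) := by
      rw [mul_pow, Real.rpow_mul hu0.le, Real.rpow_natCast]
    have h2 : u ^ (-ρ) * u ^ (α * (k:ℝ)) = u ^ ((k:ℝ)*α - ρ) := by
      rw [← Real.rpow_add hu0]
      congr 1
      ring
    rw [htermdef, hcdef]
    simp only []
    rw [h1, ← h2]
    ring
  -- sum of integrals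
  have hHS := hasSum_integral_of_summable_integral_norm
    (μ := volume.restrict (Set.Ioi 0)) (F := term) hint hsumnorm
  have hbin : HasSum (fun k : ℕ => w ^ (ρ-1) * (poch (-γ) k * (-x)^k / (Nat.factorial k : ℝ)))
      (w ^ (ρ-1) * (1 + x) ^ γ) := (hasSum_binomial hγ hx hx1).mul_left _
  have hfun : (fun k : ℕ => ∫ u in Set.Ioi (0:ℝ), term k u)
      = fun k : ℕ => w ^ (ρ-1) * (poch (-γ) k * (-x)^k / (Nat.factorial k : ℝ)) :=
    funext hval
  rw [hfun] at hHS
  have htsum_eq : ∫ u in Set.Ioi (0:ℝ), (∑' k, term k u) = w ^ (ρ-1) * (1 + x) ^ γ := by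
    rw [← hHS.tsum_eq]
    exact hbin.tsum_eq
  -- integrability of tsum
  have hasm : ∀ k : ℕ, AEStronglyMeasurable (term k) (volume.restrict (Set.Ioi 0)) :=
    fun k => (hint k).1
  have hf'' : ∀ k : ℕ, AEMeasurable (fun u => (‖term k u‖₊ : ENNReal))
      (volume.restrict (Set.Ioi 0)) := fun k => (hasm k).nnnorm.aemeasurable.coe_nnreal_ennreal
  have hlt : ∑' k : ℕ, ∫⁻ u in Set.Ioi (0:ℝ), ‖term k u‖₊ ≠ ⊤ := by
    have heach : ∀ k : ℕ, ∫⁻ u in Set.Ioi (0:ℝ), (‖term k u‖₊ : ENNReal)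
        = ENNReal.ofReal (∫ u in Set.Ioi (0:ℝ), ‖term k u‖) := by
      intro k
      have h := lintegral_coe_eq_integral (fun u => ‖term k u‖₊)
        (by simpa [coe_nnnorm] using (hint k).norm)
      simpa [coe_nnnorm] using h
    simp_rw [heach]
    rw [← ENNReal.ofReal_tsum_of_nonneg
      (fun k => integral_nonneg fun u => norm_nonneg _) hsumnorm]
    exact ENNReal.ofReal_ne_top
  have hhh : ∀ᵐ u ∂(volume.restrict (Set.Ioi 0)), Summable fun k : ℕ => ‖term k u‖ := by
    rw [← lintegral_tsum hf''] at hlt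
    refine (ae_lt_top' (AEMeasurable.ennreal_tsum hf'') hlt).mono fun u hu => ?_
    have := (ENNReal.tsum_coe_ne_top_iff_summable_coe (f := fun k => ‖term k u‖₊)).1 hu.ne
    simpa [coe_nnnorm] using this
  have hG_asm : AEStronglyMeasurable (fun u => ∑' k, term k u)
      (volume.restrict (Set.Ioi 0)) := by
    refine aestronglyMeasurable_of_tendsto_ae Filter.atTop
      (f := fun n u => ∑ k ∈ Finset.range n, term k u)
      (fun n => Finset.aestronglyMeasurable_fun_sum _ fun k _ => hasm k) ?_
    filter_upwards [hhh] with u hu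
    exact (hu.of_norm).hasSum.tendsto_sum_nat
  have hG_fin : HasFiniteIntegral (fun u => ∑' k, term k u)
      (volume.restrict (Set.Ioi 0)) := by
    rw [HasFiniteIntegral]
    calc ∫⁻ u in Set.Ioi (0:ℝ), ‖∑' k, term k u‖₊
        ≤ ∫⁻ u in Set.Ioi (0:ℝ), ∑' k, (‖term k u‖₊ : ENNReal) := by
          refine lintegral_mono_ae ?_
          filter_upwards [hhh] with u hu
          have h1 : ‖∑' k, term k u‖₊ ≤ ∑' k, ‖term k u‖₊ := by
            apply nnnorm_tsum_le
            rwa [← NNReal.summable_coe]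
          calc (‖∑' k, term k u‖₊ : ENNReal) ≤ ((∑' k, ‖term k u‖₊ : NNReal) : ENNReal) :=
                ENNReal.coe_le_coe.2 h1
            _ = ∑' k, (‖term k u‖₊ : ENNReal) := ENNReal.coe_tsum (by rwa [← NNReal.summable_coe])
      _ = ∑' k, ∫⁻ u in Set.Ioi (0:ℝ), (‖term k u‖₊ : ENNReal) := lintegral_tsum hf''
      _ < ⊤ := hlt.lt_top
  have hGint : IntegrableOn (fun u => ∑' k, term k u) (Set.Ioi 0) := ⟨hG_asm, hG_fin⟩
  constructor
  · exact (hGint.congr_fun (fun u hu => (hpt u hu).symm) measurableSet_Ioi)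
  · rw [setIntegral_congr_fun measurableSet_Ioi hpt, htsum_eq]

theorem stmt2 (α ρ β γ : ℝ) (hα : 0 < α) (hα1 : α ≤ 1) (hρ : 0 < ρ) (hρ1 : ρ < 1)
    (hβ : 0 < β) (hγ : 0 ≤ γ) (f : ℝ → ℝ) (hf : ContDiff ℝ 1 f)
    (hgrow : ∃ C a : ℝ, ∀ t ≥ (0 : ℝ), |f t| ≤ C * Real.exp (a * t))
    (hgrow' : ∃ C a : ℝ, ∀ t ≥ (0 : ℝ), |deriv f t| ≤ C * Real.exp (a * t)) :
    ∀ w > (0 : ℝ), β < w ^ α →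
      IntegrableOn (fun t => Real.exp (-w * t) * f t) (Set.Ioi 0) →
      IntegrableOn (fun t => Real.exp (-w * t) * deriv f t) (Set.Ioi 0) →
      ∫ t in Set.Ioi (0 : ℝ), Real.exp (-w * t) * hpDeriv α ρ β γ f t
        = w ^ ρ * (1 + β * w ^ (-α)) ^ γ *
            (∫ t in Set.Ioi (0 : ℝ), Real.exp (-w * t) * f t)
          - w ^ (ρ - 1) * (1 + β * w ^ (-α)) ^ γ * f 0 := by
  intro w hw hβw hLf hLf'
  obtain ⟨hKint, hKval⟩ := laplace_kernel hα hρ hρ1 hβ hγ hw hβw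
  set F : ℝ → ℝ := (Set.Ioi 0).indicator (fun s => Real.exp (-w * s) * deriv f s) with hFdef
  set G : ℝ → ℝ := (Set.Ioi 0).indicator
    (fun u => Real.exp (-w * u) * (u ^ (-ρ) * ml3 α (1 - ρ) (-γ) (-β * u ^ α))) with hGdef
  have hFint : Integrable F := (integrable_indicator_iff measurableSet_Ioi).2 hLf'
  have hGint : Integrable G := (integrable_indicator_iff measurableSet_Ioi).2 hKint
  set L : ℝ →L[ℝ] ℝ →L[ℝ] ℝ := ContinuousLinearMap.mul ℝ ℝ with hLdef
  have hIconv := integral_convolution L hFint hGint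
  have hconv : ∀ x : ℝ, (F ⋆[L] G) x
      = (Set.Ioi 0).indicator (fun t => Real.exp (-w * t) * hpDeriv α ρ β γ f t) x := by
    intro x
    rcases le_or_gt x 0 with hx | hx
    · rw [Set.indicator_of_notMem (by simpa using hx)]
      rw [convolution_def]
      have hzero : ∀ s : ℝ, L (F s) (G (x - s)) = 0 := by
        intro s
        rcases le_or_gt s 0 with hs | hs
        · rw [hFdef, Set.indicator_of_notMem (by simpa using hs)]
          simp
        · rw [hGdef, Set.indicator_of_notMem (by simp; linarith)]
          simp
      simp_rw [hzero]
      exact integral_zero _ _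
    · rw [Set.indicator_of_mem (by simpa using hx)]
      rw [convolution_def]
      have hval : ∀ s : ℝ, L (F s) (G (x - s))
          = (Set.Ioo 0 x).indicator (fun s => Real.exp (-w * x) *
              ((x - s) ^ (-ρ) * ml3 α (1 - ρ) (-γ) (-β * (x - s) ^ α) * deriv f s)) s := by
        intro s
        rcases lt_trichotomy s 0 with hs | hs | hs
        · rw [hFdef, Set.indicator_of_notMem (by simpa using hs.le),
            Set.indicator_of_notMem (by simp [Set.mem_Ioo]; intro h; linarith)]
          simp
        · subst hs  -- s = 0? careful: hs : s = 0? trichotomy gives s < 0, s = 0, 0 < s with this order? lt_trichotomy s 0 : s < 0 ∨ s = 0 ∨ 0 < s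
          rw [hFdef, Set.indicator_of_notMem (by simp),
            Set.indicator_of_notMem (by simp [Set.mem_Ioo])]
          simp
        · rcases le_or_gt x s with hxs | hxs
          · rw [hGdef, Set.indicator_of_notMem (by simp; linarith),
              Set.indicator_of_notMem (by simp [Set.mem_Ioo]; intro h; linarith)]
            simp
          · rw [hFdef, hGdef, Set.indicator_of_mem (by simpa using hs),
              Set.indicator_of_mem (by simp; linarith),
              Set.indicator_of_mem (by simp [Set.mem_Ioo]; exact ⟨hs, hxs⟩)]
            rw [hLdef]
            simp only [ContinuousLinearMap.mul_apply']
            rw [show Real.exp (-w * s) * deriv f s *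
                (Real.exp (-w * (x - s)) * ((x-s) ^ (-ρ) * ml3 α (1 - ρ) (-γ) (-β * (x-s) ^ α)))
              = (Real.exp (-w * s) * Real.exp (-w * (x - s))) *
                ((x-s) ^ (-ρ) * ml3 α (1 - ρ) (-γ) (-β * (x-s) ^ α) * deriv f s) by ring,
              ← Real.exp_add]
            ring_nf
      simp_rw [hval]
      rw [integral_indicator measurableSet_Ioo, integral_const_mul]
      rw [hpDeriv, intervalIntegral.integral_of_le hx.le, ← integral_Ioc_eq_integral_Ioo]
  have hmain : ∫ t in Set.Ioi (0:ℝ), Real.exp (-w * t) * hpDeriv α ρ β γ f t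
      = (∫ s, F s) * (∫ u, G u) := by
    rw [← integral_indicator measurableSet_Ioi, ← integral_congr_ae
      (Filter.Eventually.of_forall hconv), hIconv]
    rfl
  have hFval : (∫ s, F s) = w * (∫ t in Set.Ioi (0:ℝ), Real.exp (-w * t) * f t) - f 0 := by
    rw [hFdef, integral_indicator measurableSet_Ioi]
    exact laplace_deriv hf hw hLf hLf'
  have hGval : (∫ u, G u) = w ^ (ρ - 1) * (1 + β * w ^ (-α)) ^ γ := by
    rw [hGdef, integral_indicator measurableSet_Ioi]
    exact hKval
  rw [hmain, hFval, hGval]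
  have hwpow : w * w ^ (ρ - 1) = w ^ ρ := by
    nth_rewrite 1 [← Real.rpow_one w]
    rw [← Real.rpow_add hw]
    norm_num
  rw [← hwpow]
  ring
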